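/- Let A be the generator of an irreducible continuous-time Markov chain on a finite set S = {1, …, n} with unique invariant probability measure μ of full support. For a probability vector ξ on S define the Donsker–Varadhan rate function I_e^A(ξ) = sup { −Σ_{i=1}^n ξ_i (A u)_i / u_i : u ∈ ℝⁿ with u_i > 0 for all i }. Then for every probability vector ξ on S, setting u_i = √(ξ_i/μ_i), one has ⟨u, −A u⟩_μ ≤ I_e^A(ξ), where ⟨f, g⟩_μ = Σ_i μ_i f_i g_i. (Since ⟨u, −A u⟩_μ = ⟨u, −sym(A) u⟩_μ equals the Donsker–Varadhan rate function of the process generated by the symmetric part sym(A), this says I_e^{sym(A)}(ξ) ≤ I_e^A(ξ) for all ξ.) -/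

import Mathlib

open Matrix Finset Filter Topology

/-- For an irreducible Markov generator `A` on `S = {1,…,n}` with invariant
probability measure `μ` of full support, and any probability vector `ξ`, setting
`u_i = √(ξ_i/μ_i)` one has `⟨u, -A u⟩_μ ≤ I_e^A(ξ)`, where
`I_e^A(ξ) = sup { -Σ_i ξ_i (Au)_i/u_i : u > 0 }` is the Donsker–Varadhan rate function. -/
theorem donsker_varadhan_reversible_min
    {n : ℕ} (hn : 0 < n)
    (A : Matrix (Fin n) (Fin n) ℝ) (μ : Fin n → ℝ)
    -- A is a Markov generator
    (hA_off : ∀ i j, i ≠ j → 0 ≤ A i j)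
    (hA_row : ∀ i, ∑ j, A i j = 0)
    -- μ is a probability measure with full support, invariant for A
    (hμ_pos : ∀ i, 0 < μ i)
    (hμ_sum : ∑ i, μ i = 1)
    (hμ_inv : ∀ j, ∑ i, μ i * A i j = 0)
    -- irreducibility/ergodicity: the kernel of A consists of the constant functions
    (h_erg : ∀ f : Fin n → ℝ, A *ᵥ f = 0 → ∃ c : ℝ, ∀ i, f i = c)
    -- ξ is a probability vector
    (ξ : Fin n → ℝ)
    (hξ_nonneg : ∀ i, 0 ≤ ξ i)
    (hξ_sum : ∑ i, ξ i = 1) :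
    (∑ i, μ i * Real.sqrt (ξ i / μ i) * (-(A *ᵥ fun j => Real.sqrt (ξ j / μ j)) i)) ≤
      sSup {x : ℝ | ∃ u : Fin n → ℝ, (∀ i, 0 < u i) ∧
        x = -∑ i, ξ i * (A *ᵥ u) i / u i} := by
  classical
  set w : Fin n → ℝ := fun j => Real.sqrt (ξ j / μ j) with hw
  have hw_nonneg : ∀ i, 0 ≤ w i := fun i => Real.sqrt_nonneg _
  set S : Set ℝ := {x : ℝ | ∃ u : Fin n → ℝ, (∀ i, 0 < u i) ∧
      x = -∑ i, ξ i * (A *ᵥ u) i / u i} with hSdef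
  -- boundedness of the set
  have hbdd : BddAbove S := by
    refine ⟨∑ i, ξ i * (-A i i), ?_⟩
    rintro x ⟨v, hv, rfl⟩
    have h1 : -∑ i, ξ i * (A *ᵥ v) i / v i = ∑ i, -(ξ i * (A *ᵥ v) i / v i) := by
      rw [← Finset.sum_neg_distrib]
    rw [h1]
    apply Finset.sum_le_sum
    intro i _
    rw [mul_neg, neg_le_neg_iff]
    have hAv : A i i * v i ≤ (A *ᵥ v) i := by
      have : (A *ᵥ v) i = ∑ j, A i j * v j := rfl
      rw [this, ← Finset.add_sum_erase _ _ (Finset.mem_univ i)]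
      have : 0 ≤ ∑ j ∈ Finset.univ.erase i, A i j * v j := by
        apply Finset.sum_nonneg
        intro j hj
        exact mul_nonneg (hA_off i j (Ne.symm (Finset.ne_of_mem_erase hj))) (le_of_lt (hv j))
      linarith
    have : A i i ≤ (A *ᵥ v) i / v i := by
      rw [le_div_iff₀ (hv i)]; exact hAv
    calc ξ i * A i i ≤ ξ i * ((A *ᵥ v) i / v i) :=
          mul_le_mul_of_nonneg_left this (hξ_nonneg i)
      _ = ξ i * (A *ᵥ v) i / v i := by rw [mul_div_assoc]
  -- since row sums vanish, A(w + ε) = A w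
  have hAshift : ∀ ε : ℝ, (A *ᵥ fun j => w j + ε) = A *ᵥ w := by
    intro ε
    funext i
    show ∑ j, A i j * (w j + ε) = ∑ j, A i j * w j
    have : ∑ j, A i j * (w j + ε) = (∑ j, A i j * w j) + (∑ j, A i j) * ε := by
      rw [Finset.sum_mul]
      rw [← Finset.sum_add_distrib]
      apply Finset.sum_congr rfl
      intro j _
      ring
    rw [this, hA_row, zero_mul, add_zero]
  -- membership of the shifted elements
  have hmem : ∀ ε : ℝ, 0 < ε → (-∑ i, ξ i * (A *ᵥ w) i / (w i + ε)) ∈ S := by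
    intro ε hε
    refine ⟨fun j => w j + ε, fun i => add_pos_of_nonneg_of_pos (hw_nonneg i) hε, ?_⟩
    rw [hAshift]
  -- identify the LHS
  have hLHS : (∑ i, μ i * w i * (-(A *ᵥ w) i)) = -∑ i, ξ i * (A *ᵥ w) i / w i := by
    rw [← Finset.sum_neg_distrib]
    apply Finset.sum_congr rfl
    intro i _
    by_cases h : ξ i = 0
    · have hwi : w i = 0 := by simp [hw, h]
      simp [h, hwi]
    · have hξpos : 0 < ξ i := lt_of_le_of_ne (hξ_nonneg i) (Ne.symm h)
      have hwipos : 0 < w i := Real.sqrt_pos.mpr (div_pos hξpos (hμ_pos i))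
      have hsq : w i * w i = ξ i / μ i := by
        rw [hw]
        exact Real.mul_self_sqrt (div_nonneg (hξ_nonneg i) (le_of_lt (hμ_pos i)))
      have hμw : μ i * w i * w i = ξ i := by
        rw [mul_assoc, hsq]
        exact mul_div_cancel₀ _ (ne_of_gt (hμ_pos i))
      field_simp
      linear_combination (-(A *ᵥ w) i) * hμw
  -- the limit
  have htend : Tendsto (fun ε : ℝ => -∑ i, ξ i * (A *ᵥ w) i / (w i + ε)) (𝓝[>] (0:ℝ))
      (𝓝 (-∑ i, ξ i * (A *ᵥ w) i / w i)) := by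
    apply Tendsto.neg
    apply tendsto_finset_sum
    intro i _
    by_cases h : ξ i = 0
    · simpa [h] using tendsto_const_nhds
    · have hξpos : 0 < ξ i := lt_of_le_of_ne (hξ_nonneg i) (Ne.symm h)
      have hwipos : 0 < w i := Real.sqrt_pos.mpr (div_pos hξpos (hμ_pos i))
      have hden : Tendsto (fun ε : ℝ => w i + ε) (𝓝[>] (0:ℝ)) (𝓝 (w i)) := by
        have h2 : Tendsto (fun ε : ℝ => w i + ε) (𝓝 (0:ℝ)) (𝓝 (w i + 0)) :=
          (tendsto_const_nhds.add tendsto_id)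
        rw [add_zero] at h2
        exact h2.mono_left nhdsWithin_le_nhds
      exact Tendsto.div tendsto_const_nhds hden (ne_of_gt hwipos)
  show (∑ i, μ i * w i * (-(A *ᵥ w) i)) ≤ sSup S
  rw [hLHS]
  exact le_of_tendsto htend
    (eventually_nhdsWithin_of_forall fun ε hε => le_csSup hbdd (hmem ε hε))
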